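/- Let m, n, p, q be positive integers, F be a finite field, and φ : M_{m×n}(F) → M_{p×q}(F) be a degenerate adjacency preserver such that φ(0) = 0. Then φ(M) has rank at most 1 for every M ∈ M_{m×n}(F). -/

import Mathlib

open Matrix

variable {D : Type*} [DivisionRing D]

/-- The rank of a matrix over a division ring: the dimension of its row space,
i.e. of the left `D`-subspace of `D^n` spanned by the rows. -/
noncomputable def rowRank {m n : ℕ} (A : Matrix (Fin m) (Fin n) D) : ℕ :=
  Module.finrank D (Submodule.span D (Set.range fun i => A i))

/-- Two matrices are adjacent if their difference has rank one. -/
def Adjacent {m n : ℕ} (A B : Matrix (Fin m) (Fin n) D) : Prop :=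
  rowRank (A - B) = 1

/-- `R(x)`: the set of matrices of the form `ᵗu x` for a fixed row vector `x`. -/
def Rvec {m n : ℕ} (x : Fin n → D) : Set (Matrix (Fin m) (Fin n) D) :=
  { M | ∃ u : Fin m → D, ∀ i j, M i j = u i * x j }

/-- `L(ᵗy)`: the set of matrices of the form `ᵗy v` for a fixed column vector `ᵗy`. -/
def Lvec {m n : ℕ} (y : Fin m → D) : Set (Matrix (Fin m) (Fin n) D) :=
  { M | ∃ v : Fin n → D, ∀ i j, M i j = y i * v j }

/-- `R_d`: the matrices whose row space is contained in `d`. -/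
def Rsub {m n : ℕ} (d : Submodule D (Fin n → D)) : Set (Matrix (Fin m) (Fin n) D) :=
  { M | ∀ i, M i ∈ d }

/-- `L_e`: the matrices whose column space (a right subspace, i.e. a `Dᵐᵒᵖ`-submodule)
is contained in `e`. -/
def Lsub {m n : ℕ} (e : Submodule Dᵐᵒᵖ (Fin m → D)) : Set (Matrix (Fin m) (Fin n) D) :=
  { M | ∀ j, (fun i => M i j) ∈ e }

/-- The orthogonal set of a set `e` of column vectors. -/
def perpSet {m : ℕ} (e : Set (Fin m → D)) : Set (Fin m → D) :=
  { u | ∀ v ∈ e, ∑ i, u i * v i = 0 }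

/-- The `p × q` matrix with upper-left block `B` and zeros elsewhere. -/
def pad {m n : ℕ} (p q : ℕ) (B : Matrix (Fin m) (Fin n) D) :
    Matrix (Fin p) (Fin q) D :=
  Matrix.of fun i j =>
    if hi : (i : ℕ) < m then if hj : (j : ℕ) < n then B ⟨i, hi⟩ ⟨j, hj⟩ else 0 else 0

/-- `φ` is degenerate with respect to `A`. -/
def DegenerateAt {m n p q : ℕ} (φ : Matrix (Fin m) (Fin n) D → Matrix (Fin p) (Fin q) D)
    (A : Matrix (Fin m) (Fin n) D) : Prop :=
  ∃ x : Fin p → D, x ≠ 0 ∧ ∃ y : Fin q → D, y ≠ 0 ∧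
    ∀ M : Matrix (Fin m) (Fin n) D, rowRank M ≤ 1 →
      φ (A + M) - φ A ∈ Rvec y ∪ Lvec x

/-- `φ` is degenerate: degenerate with respect to every matrix. -/
def Degenerate {m n p q : ℕ} (φ : Matrix (Fin m) (Fin n) D → Matrix (Fin p) (Fin q) D) :
    Prop :=
  ∀ A, DegenerateAt φ A

/-- A map (sending `0` to `0`) is degenerate with respect to `0` iff it maps every matrix of
rank at most one into `R(y) ∪ L(ᵗx)` for some nonzero `y`, `x`. -/
def DegZero {m n p q : ℕ} (φ : Matrix (Fin m) (Fin n) D → Matrix (Fin p) (Fin q) D) :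
    Prop :=
  ∃ x : Fin p → D, x ≠ 0 ∧ ∃ y : Fin q → D, y ≠ 0 ∧
    ∀ M : Matrix (Fin m) (Fin n) D, rowRank M ≤ 1 → φ M ∈ Rvec y ∪ Lvec x

/-- A standard adjacency preserver. -/
def Standard {m n p q : ℕ} (φ : Matrix (Fin m) (Fin n) D → Matrix (Fin p) (Fin q) D) :
    Prop :=
  (m ≤ p ∧ n ≤ q ∧ ∃ τ : D ≃+* D, ∃ T : Matrix (Fin p) (Fin p) D,
    ∃ S : Matrix (Fin q) (Fin q) D, ∃ R : Matrix (Fin p) (Fin q) D,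
    IsUnit T ∧ IsUnit S ∧ ∀ A, φ A = T * pad p q (A.map τ) * S + R) ∨
  (n ≤ p ∧ m ≤ q ∧ ∃ σ : D → D, Function.Bijective σ ∧ σ 1 = 1 ∧
    (∀ a b, σ (a + b) = σ a + σ b) ∧ (∀ a b, σ (a * b) = σ b * σ a) ∧
    ∃ T : Matrix (Fin p) (Fin p) D, ∃ S : Matrix (Fin q) (Fin q) D,
    ∃ R : Matrix (Fin p) (Fin q) D, IsUnit T ∧ IsUnit S ∧
    ∀ A, φ A = T * pad p q (A.map σ).transpose * S + R)

/-- A division ring is EAS if every (unital) ring endomorphism of it is surjective. -/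
def EAS (D : Type*) [DivisionRing D] : Prop :=
  ∀ f : D →+* D, Function.Surjective f

/-- A set of matrices is adjacent if any two distinct members are adjacent. -/
def IsAdjacentSet {m n : ℕ} (S : Set (Matrix (Fin m) (Fin n) D)) : Prop :=
  ∀ A ∈ S, ∀ B ∈ S, A ≠ B → Adjacent A B

section Stmt19Aux

open Matrix Submodule

variable {F : Type*} [Field F]

/-- Entry formula for `vecMulVec`. -/
private lemma vmv_apply {p q : ℕ} (u : Fin p → F) (v : Fin q → F) (i j) :
    vecMulVec u v i j = u i * v j := rfl

private lemma rowRank_le_one_iff {p q : ℕ} {X : Matrix (Fin p) (Fin q) F} :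
    rowRank X ≤ 1 ↔ ∃ u v, X = vecMulVec u v := by
  constructor
  · intro h
    have hP : (Submodule.span F (Set.range fun i => X i)).IsPrincipal :=
      (Submodule.finrank_le_one_iff_isPrincipal _).mp h
    obtain ⟨v, hv⟩ := hP
    have hrow : ∀ i, ∃ c : F, c • v = X i := by
      intro i
      have : X i ∈ Submodule.span F (Set.range fun i => X i) :=
        Submodule.subset_span ⟨i, rfl⟩
      rw [hv] at this
      exact Submodule.mem_span_singleton.mp this
    refine ⟨fun i => Classical.choose (hrow i), v, ?_⟩
    ext i j
    have := Classical.choose_spec (hrow i)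
    rw [vmv_apply]
    calc X i j = (Classical.choose (hrow i) • v) j := by rw [this]
    _ = Classical.choose (hrow i) * v j := rfl
  · rintro ⟨u, v, rfl⟩
    have hle : Submodule.span F (Set.range fun i => vecMulVec u v i) ≤
        Submodule.span F {v} := by
      rw [Submodule.span_le]
      rintro w ⟨i, rfl⟩
      have : vecMulVec u v i = u i • v := by
        ext j; simp [vmv_apply, Pi.smul_apply, smul_eq_mul]
      show vecMulVec u v i ∈ (Submodule.span F {v} : Submodule F (Fin q → F))
      rw [this]
      exact Submodule.smul_mem _ _ (Submodule.mem_span_singleton_self v)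
    have h2 : Module.finrank F (Submodule.span F ({v} : Set (Fin q → F))) ≤ 1 := by
      by_cases hv : v = 0
      · subst hv
        rw [Submodule.span_zero_singleton]
        simp [finrank_bot]
      · rw [finrank_span_singleton hv]
    exact le_trans (Submodule.finrank_mono hle) h2

private lemma rowRank_zero_iff {p q : ℕ} {X : Matrix (Fin p) (Fin q) F} :
    rowRank X = 0 ↔ X = 0 := by
  constructor
  · intro h
    have : Submodule.span F (Set.range fun i => X i) = ⊥ :=
      Submodule.finrank_eq_zero.mp h
    have h2 := Submodule.span_eq_bot.mp this
    ext i j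
    have : X i = 0 := h2 _ ⟨i, rfl⟩
    simpa using congrFun this j
  · rintro rfl
    have : Submodule.span F (Set.range fun i => (0 : Matrix (Fin p) (Fin q) F) i) = ⊥ := by
      rw [Submodule.span_eq_bot]
      rintro w ⟨i, rfl⟩
      rfl
    rw [rowRank, this, finrank_bot]

private lemma rowRank_eq_one_iff {p q : ℕ} {X : Matrix (Fin p) (Fin q) F} :
    rowRank X = 1 ↔ (∃ u v, X = vecMulVec u v) ∧ X ≠ 0 := by
  constructor
  · intro h
    refine ⟨rowRank_le_one_iff.mp h.le, ?_⟩
    intro h0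
    rw [rowRank_zero_iff.mpr h0] at h
    · exact one_ne_zero h.symm
  · rintro ⟨hd, h0⟩
    have h1 := rowRank_le_one_iff.mpr hd
    have h2 : rowRank X ≠ 0 := fun hc => h0 (rowRank_zero_iff.mp hc)
    omega

end Stmt19Aux
section Stmt19Aux2

open Matrix

variable {F : Type*} [Field F] {p q : ℕ}

private lemma vmv_ne_zero {u : Fin p → F} {v : Fin q → F} (hu : u ≠ 0) (hv : v ≠ 0) :
    vecMulVec u v ≠ 0 := by
  obtain ⟨i, hi⟩ := Function.ne_iff.mp hu
  obtain ⟨j, hj⟩ := Function.ne_iff.mp hv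
  intro h
  have := congrFun (congrFun h i) j
  simp only [vecMulVec_apply, Matrix.zero_apply] at this
  exact (mul_ne_zero hi hj) this

private lemma vmv_nonzero_factors {u : Fin p → F} {v : Fin q → F}
    (h : vecMulVec u v ≠ 0) : u ≠ 0 ∧ v ≠ 0 := by
  constructor
  · rintro rfl; apply h; ext i j; simp [vecMulVec_apply]
  · rintro rfl; apply h; ext i j; simp [vecMulVec_apply]

private lemma vmv_sub_right (u : Fin p → F) (b b' : Fin q → F) :
    vecMulVec u b - vecMulVec u b' = vecMulVec u (b - b') := by
  ext i j; simp [vecMulVec_apply, mul_sub]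

private lemma vmv_sub_left (u u' : Fin p → F) (b : Fin q → F) :
    vecMulVec u b - vecMulVec u' b = vecMulVec (u - u') b := by
  ext i j; simp [vecMulVec_apply, sub_mul]

private lemma vmv_smul_left (c : F) (u : Fin p → F) (v : Fin q → F) :
    vecMulVec (c • u) v = c • vecMulVec u v := by
  ext i j; simp [vecMulVec_apply, mul_assoc]

private lemma vmv_smul_comm (c : F) (u : Fin p → F) (v : Fin q → F) :
    vecMulVec (c • u) v = vecMulVec u (c • v) := by
  ext i j; simp [vecMulVec_apply]; ring

-- membership in Lvec / Rvec
private lemma mem_Lvec_iff {x : Fin p → F} {X : Matrix (Fin p) (Fin q) F} :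
    X ∈ Lvec x ↔ ∃ v, X = vecMulVec x v := by
  constructor
  · rintro ⟨v, hv⟩; exact ⟨v, by ext i j; rw [hv i j]; rfl⟩
  · rintro ⟨v, rfl⟩; exact ⟨v, fun i j => rfl⟩

private lemma mem_Rvec_iff {y : Fin q → F} {X : Matrix (Fin p) (Fin q) F} :
    X ∈ Rvec y ↔ ∃ u, X = vecMulVec u y := by
  constructor
  · rintro ⟨u, hu⟩; exact ⟨u, by ext i j; rw [hu i j]; rfl⟩
  · rintro ⟨u, rfl⟩; exact ⟨u, fun i j => rfl⟩

private lemma Lvec_zero_mem (x : Fin p → F) : (0 : Matrix (Fin p) (Fin q) F) ∈ Lvec x :=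
  ⟨0, fun i j => by simp⟩

private lemma Rvec_zero_mem (y : Fin q → F) : (0 : Matrix (Fin p) (Fin q) F) ∈ Rvec y :=
  ⟨0, fun i j => by simp⟩

private lemma Lvec_sub_mem {x : Fin p → F} {X Y : Matrix (Fin p) (Fin q) F}
    (hX : X ∈ Lvec x) (hY : Y ∈ Lvec x) : X - Y ∈ Lvec x := by
  obtain ⟨v, rfl⟩ := mem_Lvec_iff.mp hX
  obtain ⟨w, rfl⟩ := mem_Lvec_iff.mp hY
  exact mem_Lvec_iff.mpr ⟨v - w, by rw [vmv_sub_right]⟩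

private lemma Rvec_sub_mem {y : Fin q → F} {X Y : Matrix (Fin p) (Fin q) F}
    (hX : X ∈ Rvec y) (hY : Y ∈ Rvec y) : X - Y ∈ Rvec y := by
  obtain ⟨u, rfl⟩ := mem_Rvec_iff.mp hX
  obtain ⟨w, rfl⟩ := mem_Rvec_iff.mp hY
  exact mem_Rvec_iff.mpr ⟨u - w, by rw [vmv_sub_left]⟩

private lemma Lvec_add_mem {x : Fin p → F} {X Y : Matrix (Fin p) (Fin q) F}
    (hX : X ∈ Lvec x) (hY : Y ∈ Lvec x) : X + Y ∈ Lvec x := by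
  obtain ⟨v, rfl⟩ := mem_Lvec_iff.mp hX
  obtain ⟨w, rfl⟩ := mem_Lvec_iff.mp hY
  refine mem_Lvec_iff.mpr ⟨v + w, ?_⟩
  ext i j; simp [vecMulVec_apply, mul_add]

private lemma Rvec_add_mem {y : Fin q → F} {X Y : Matrix (Fin p) (Fin q) F}
    (hX : X ∈ Rvec y) (hY : Y ∈ Rvec y) : X + Y ∈ Rvec y := by
  obtain ⟨u, rfl⟩ := mem_Rvec_iff.mp hX
  obtain ⟨w, rfl⟩ := mem_Rvec_iff.mp hY
  refine mem_Rvec_iff.mpr ⟨u + w, ?_⟩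
  ext i j; simp [vecMulVec_apply, add_mul]

private lemma Lvec_rowRank_le {x : Fin p → F} {X : Matrix (Fin p) (Fin q) F}
    (hX : X ∈ Lvec x) : rowRank X ≤ 1 := by
  obtain ⟨v, rfl⟩ := mem_Lvec_iff.mp hX
  exact rowRank_le_one_iff.mpr ⟨x, v, rfl⟩

private lemma Rvec_rowRank_le {y : Fin q → F} {X : Matrix (Fin p) (Fin q) F}
    (hX : X ∈ Rvec y) : rowRank X ≤ 1 := by
  obtain ⟨u, rfl⟩ := mem_Rvec_iff.mp hX
  exact rowRank_le_one_iff.mpr ⟨u, y, rfl⟩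

-- two decompositions of one nonzero rank-one matrix have parallel factors
private lemma outer_eq_outer {u u' : Fin p → F} {v v' : Fin q → F}
    (h : vecMulVec u v = vecMulVec u' v') (hne : vecMulVec u v ≠ 0) :
    (∃ c : F, c ≠ 0 ∧ u' = c • u) ∧ (∃ c : F, c ≠ 0 ∧ v' = c • v) := by
  have hu : u ≠ 0 := (vmv_nonzero_factors hne).1
  have hv : v ≠ 0 := (vmv_nonzero_factors hne).2
  have hne' : vecMulVec u' v' ≠ 0 := h ▸ hne
  have hu' : u' ≠ 0 := (vmv_nonzero_factors hne').1
  have hv' : v' ≠ 0 := (vmv_nonzero_factors hne').2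
  obtain ⟨i₀, hi₀'⟩ := Function.ne_iff.mp hu
  obtain ⟨j₀, hj₀'⟩ := Function.ne_iff.mp hv
  have hi₀ : u i₀ ≠ 0 := by simpa using hi₀'
  have hj₀ : v j₀ ≠ 0 := by simpa using hj₀'
  have hent : ∀ i j, u i * v j = u' i * v' j := fun i j => by
    have := congrFun (congrFun h i) j; simpa [vecMulVec_apply] using this
  have hui'₀ : u' i₀ ≠ 0 := by
    intro hz
    have := hent i₀ j₀; rw [hz, zero_mul] at this
    exact mul_ne_zero hi₀ hj₀ this
  have hvpar : v' = (u i₀ / u' i₀) • v := by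
    ext j
    simp only [Pi.smul_apply, smul_eq_mul]
    rw [div_mul_eq_mul_div, eq_div_iff hui'₀]
    linear_combination -(hent i₀ j)
  have hvj₀' : v' j₀ ≠ 0 := by
    rw [hvpar]
    simp only [Pi.smul_apply, smul_eq_mul]
    exact mul_ne_zero (div_ne_zero hi₀ hui'₀) hj₀
  have hupar : u' = (v j₀ / v' j₀) • u := by
    ext i
    simp only [Pi.smul_apply, smul_eq_mul]
    rw [div_mul_eq_mul_div, eq_div_iff hvj₀']
    linear_combination -(hent i j₀)
  exact ⟨⟨v j₀ / v' j₀, div_ne_zero hj₀ hvj₀', hupar⟩,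
         ⟨u i₀ / u' i₀, div_ne_zero hi₀ hui'₀, hvpar⟩⟩

end Stmt19Aux2
section Stmt19Aux3

open Matrix

variable {F : Type*} [Field F] {p q : ℕ}

private lemma rowRank_neg (X : Matrix (Fin p) (Fin q) F) : rowRank (-X) = rowRank X := by
  have hsp : Submodule.span F (Set.range fun i => (-X) i) =
      Submodule.span F (Set.range fun i => X i) := by
    apply le_antisymm
    · rw [Submodule.span_le]
      rintro w ⟨i, rfl⟩
      have h1 : (-X) i = -(X i) := by ext j; simp
      show (-X) i ∈ (Submodule.span F (Set.range fun i => X i) : Submodule F (Fin q → F))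
      rw [h1]
      exact neg_mem (Submodule.subset_span ⟨i, rfl⟩)
    · rw [Submodule.span_le]
      rintro w ⟨i, rfl⟩
      have h1 : X i = -((-X) i) := by ext j; simp
      show X i ∈ (Submodule.span F (Set.range fun i => (-X) i) : Submodule F (Fin q → F))
      rw [h1]
      exact neg_mem (Submodule.subset_span ⟨i, rfl⟩)
  rw [rowRank, rowRank, hsp]

private lemma rowRank_sub_comm (X Y : Matrix (Fin p) (Fin q) F) :
    rowRank (X - Y) = rowRank (Y - X) := by
  rw [← rowRank_neg (X - Y), neg_sub]

/-- If `α • v = β • v'` with `v ≠ 0` and `v'` not a multiple of `v`, then `α = β = 0`. -/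
private lemma indep_aux {v v' : Fin q → F} (hv : v ≠ 0) (hnp : ¬ ∃ c : F, v' = c • v)
    (α β : F) (h : α • v = β • v') : α = 0 ∧ β = 0 := by
  by_cases hβ : β = 0
  · subst hβ
    rw [zero_smul] at h
    refine ⟨?_, rfl⟩
    by_contra hα
    apply hv
    have := congrArg (fun w => α⁻¹ • w) h
    simpa [smul_smul, inv_mul_cancel₀ hα] using this
  · exfalso
    apply hnp
    have := congrArg (fun w => β⁻¹ • w) h
    simp only [smul_smul, inv_mul_cancel₀ hβ, one_smul] at this
    exact ⟨β⁻¹ * α, this.symm⟩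

/-- Alignment: two nonzero rank-one matrices whose difference has rank at most one
share their column line or their row line. -/
private lemma align {u u' : Fin p → F} {v v' : Fin q → F}
    (hu : u ≠ 0) (hv : v ≠ 0) (hu' : u' ≠ 0) (hv' : v' ≠ 0)
    (h : rowRank (vecMulVec u v - vecMulVec u' v') ≤ 1) :
    (∃ c : F, u' = c • u) ∨ (∃ c : F, v' = c • v) := by
  by_contra hc
  push_neg at hc
  obtain ⟨hcu, hcv⟩ := hc
  obtain ⟨a, b, hab⟩ := rowRank_le_one_iff.mp h
  have hent : ∀ i j, u i * v j - u' i * v' j = a i * b j := fun i j => by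
    have := congrFun (congrFun hab i) j
    simpa [vecMulVec_apply, Matrix.sub_apply] using this
  have hrow : ∀ i, (u i) • v - (u' i) • v' = (a i) • b := by
    intro i; ext j
    simpa [Pi.smul_apply, smul_eq_mul] using hent i j
  by_cases hab0 : a = 0 ∨ b = 0
  · -- difference is zero : u i • v = u' i • v' for all i
    have hz : ∀ i, (u i) • v = (u' i) • v' := by
      intro i
      have := hrow i
      rcases hab0 with h0 | h0 <;> rw [h0] at this <;> simp only [Pi.zero_apply,
        zero_smul, smul_zero, sub_eq_zero] at this <;> exact this
    obtain ⟨i₀, hi₀'⟩ := Function.ne_iff.mp hu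
    have hi₀ : u i₀ ≠ 0 := by simpa using hi₀'
    have := indep_aux hv (fun ⟨c, hc'⟩ => hcv c hc') (u i₀) (u' i₀) (hz i₀)
    exact hi₀ this.1
  · push_neg at hab0
    obtain ⟨ha, hb⟩ := hab0
    obtain ⟨i₁, hi₁'⟩ := Function.ne_iff.mp ha
    have hi₁ : a i₁ ≠ 0 := by simpa using hi₁'
    -- for every i : (u i - (a i / a i₁) * u i₁) • v = (u' i - (a i / a i₁) * u' i₁) • v'
    have key : ∀ i, u i = (a i / a i₁) * u i₁ ∧ u' i = (a i / a i₁) * u' i₁ := by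
      intro i
      have h1 := hrow i
      have h2 := hrow i₁
      have hcomb : (u i - (a i / a i₁) * u i₁) • v = (u' i - (a i / a i₁) * u' i₁) • v' := by
        ext j
        simp only [Pi.smul_apply, smul_eq_mul]
        have e1 := hent i j
        have e2 := hent i₁ j
        field_simp
        linear_combination (a i₁) * e1 - (a i) * e2
      have hz := indep_aux hv (fun ⟨c, hc'⟩ => hcv c hc') _ _ hcomb
      exact ⟨sub_eq_zero.mp hz.1, sub_eq_zero.mp hz.2⟩
    -- then u and u' are both multiples of a, hence parallel
    have hui₁ : u i₁ ≠ 0 := by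
      intro hz
      apply hu
      ext i
      have := (key i).1
      rw [hz, mul_zero] at this
      simpa using this
    have hui₁' : u' i₁ ≠ 0 := by
      intro hz
      apply hu'
      ext i
      have := (key i).2
      rw [hz, mul_zero] at this
      simpa using this
    apply hcu (u' i₁ / u i₁)
    ext i
    have h1 := (key i).1
    have h2 := (key i).2
    simp only [Pi.smul_apply, smul_eq_mul]
    rw [h1, h2]
    field_simp

end Stmt19Aux3
section Stmt19Aux4

open Matrix

variable {F : Type*} [Field F] {p q : ℕ}

/-- A matrix lying in both pencils `L(x)` and `R(y)` is a scalar multiple of `ᵗx y`. -/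
private lemma mem_inter_scalar {x : Fin p → F} {y : Fin q → F}
    {X : Matrix (Fin p) (Fin q) F} (hx : x ≠ 0)
    (hXL : X ∈ Lvec x) (hXR : X ∈ Rvec y) :
    ∃ c : F, X = c • vecMulVec x y ∧ (X ≠ 0 → c ≠ 0) := by
  obtain ⟨v, rfl⟩ := mem_Lvec_iff.mp hXL
  obtain ⟨u, hu⟩ := mem_Rvec_iff.mp hXR
  obtain ⟨i₀, hi₀'⟩ := Function.ne_iff.mp hx
  have hi₀ : x i₀ ≠ 0 := by simpa using hi₀'
  have hent : ∀ i j, x i * v j = u i * y j := fun i j => by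
    have := congrFun (congrFun hu i) j
    simpa [vecMulVec_apply] using this
  refine ⟨u i₀ / x i₀, ?_, ?_⟩
  · ext i j
    simp only [Matrix.smul_apply, vecMulVec_apply, smul_eq_mul]
    have e1 := hent i₀ j
    have e2 := hent i j
    -- x i * v j = u i * y j ; x i₀ * v j = u i₀ * y j
    field_simp
    -- goal : x i * v j * x i₀ = u i₀ * (x i * y j)  (up to arrangement)
    linear_combination x i * e1
  · intro hX0 hc
    apply hX0
    rw [div_eq_zero_iff] at hc
    have hu0 : u i₀ = 0 := hc.resolve_right hi₀
    have : ∀ j, v j = 0 := by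
      intro j
      have := hent i₀ j
      rw [hu0, zero_mul] at this
      exact (mul_eq_zero.mp this).resolve_left hi₀
    ext i j
    simp [vecMulVec_apply, this j]

/-- There is no injection from the complement of a point in `Fⁿ` (`n ≥ 2`) into
`Bool × (F \ {0})`. -/
private lemma no_injection {n : ℕ} [Fintype F] (hn : 2 ≤ n) (v : Fin n → F)
    (f : {b : Fin n → F // b ≠ v} → Bool × {c : F // c ≠ 0})
    (hf : Function.Injective f) : False := by
  classical
  have hcard := Fintype.card_le_of_injective f hf
  have h1 : Fintype.card {b : Fin n → F // b ≠ v} = Fintype.card F ^ n - 1 := by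
    rw [Fintype.card_subtype_compl, Fintype.card_subtype_eq, Fintype.card_fun,
      Fintype.card_fin]
  have h2 : Fintype.card (Bool × {c : F // c ≠ 0}) = 2 * (Fintype.card F - 1) := by
    rw [Fintype.card_prod, Fintype.card_subtype_compl, Fintype.card_subtype_eq,
      Fintype.card_bool]
  rw [h1, h2] at hcard
  have hF : 2 ≤ Fintype.card F := Fintype.one_lt_card
  set Q := Fintype.card F with hQ
  have hpow : Q * Q ≤ Q ^ n := by
    calc Q * Q = Q ^ 2 := by ring
    _ ≤ Q ^ n := Nat.pow_le_pow_right (by omega) hn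
  have h2Q : 2 * Q ≤ Q * Q := Nat.mul_le_mul_right _ hF
  omega

/-- Dichotomy for families of rank-one matrices with rank-≤1 pairwise differences which
all lie in `R(y) ∪ L(x)` : all lie in `L(x)` or all lie in `R(y)`. -/
private lemma dichotomy {ι : Sort*} {x : Fin p → F} {y : Fin q → F}
    (f : ι → Matrix (Fin p) (Fin q) F)
    (h1 : ∀ i, rowRank (f i) = 1)
    (hd : ∀ i j, rowRank (f i - f j) ≤ 1)
    (hmem : ∀ i, f i ∈ Rvec y ∪ Lvec x) :
    (∀ i, f i ∈ Lvec x) ∨ (∀ i, f i ∈ Rvec y) := by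
  classical
  by_cases hL : ∀ i, f i ∈ Lvec x
  · exact Or.inl hL
  push_neg at hL
  obtain ⟨i₀, hi₀⟩ := hL
  have hfR : f i₀ ∈ Rvec y := (hmem i₀).resolve_right hi₀
  -- decompose each f i
  have hdec : ∀ i, ∃ g : Fin p → F, ∃ h : Fin q → F,
      f i = vecMulVec g h ∧ g ≠ 0 ∧ h ≠ 0 := by
    intro i
    obtain ⟨⟨g, h, hgh⟩, hne⟩ := rowRank_eq_one_iff.mp (h1 i)
    have : vecMulVec g h ≠ 0 := hgh ▸ hne
    exact ⟨g, h, hgh, (vmv_nonzero_factors this).1, (vmv_nonzero_factors this).2⟩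
  choose g h hgh hg hh using hdec
  by_cases hcol : ∀ i j, ∃ c : F, g j = c • g i
  · -- common column line; since f i₀ ∉ Lvec x, no f i is in Lvec x
    right
    intro i
    rcases hmem i with hR | hLi
    · exact hR
    · exfalso
      obtain ⟨w, hw⟩ := mem_Lvec_iff.mp hLi
      have hne : f i ≠ 0 := by
        intro h0
        have := h1 i
        rw [rowRank_zero_iff.mpr h0] at this
        exact one_ne_zero this.symm
      have heq : vecMulVec (g i) (h i) = vecMulVec x w := by rw [← hgh i, ← hw]
      have hpar := (outer_eq_outer heq ((hgh i) ▸ hne)).1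
      obtain ⟨c, hc0, hcx⟩ := hpar
      -- x = c • g i; then g i₀ = c' • g i so f i₀ ∈ Lvec x
      obtain ⟨c₂, hc₂⟩ := hcol i i₀
      apply hi₀
      rw [mem_Lvec_iff]
      refine ⟨(c₂ / c) • h i₀, ?_⟩
      rw [hgh i₀, hc₂, hcx]
      ext i' j'
      simp only [vecMulVec_apply, Pi.smul_apply, smul_eq_mul]
      field_simp
  · -- some pair of column factors is non-parallel : common row line through h i₁
    push_neg at hcol
    obtain ⟨i₁, i₂, hnp⟩ := hcol
    have hd' : ∀ i j, rowRank (vecMulVec (g i) (h i) - vecMulVec (g j) (h j)) ≤ 1 := by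
      intro i j
      rw [← hgh i, ← hgh j]
      exact hd i j
    have h12 : ∃ c : F, h i₂ = c • h i₁ :=
      (align (hg i₁) (hh i₁) (hg i₂) (hh i₂) (hd' i₁ i₂)).resolve_left
        (fun ⟨c, hc⟩ => hnp c hc)
    have hrowline : ∀ i, ∃ c : F, c ≠ 0 ∧ h i = c • h i₁ := by
      intro i
      have key : ∃ c : F, h i = c • h i₁ := by
        rcases align (hg i₁) (hh i₁) (hg i) (hh i) (hd' i₁ i) with hcpar | hrpar
        · -- g i = c • g i₁ : compare with i₂
          obtain ⟨c, hc⟩ := hcpar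
          rcases align (hg i₂) (hh i₂) (hg i) (hh i) (hd' i₂ i) with hcpar2 | hrpar2
          · exfalso
            obtain ⟨c', hc'⟩ := hcpar2
            -- g i = c • g i₁ and g i = c' • g i₂ gives g i₂ parallel to g i₁
            have hc'0 : c' ≠ 0 := by
              intro h0; rw [h0, zero_smul] at hc'; exact hg i hc'
            exact hnp (c'⁻¹ * c) (by
              rw [← smul_smul, ← hc, hc', smul_smul, inv_mul_cancel₀ hc'0, one_smul])
          · obtain ⟨c', hc'⟩ := hrpar2
            obtain ⟨c₂, hc₂⟩ := h12
            exact ⟨c' * c₂, by rw [hc', hc₂, smul_smul]⟩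
        · exact hrpar
      obtain ⟨c, hc⟩ := key
      refine ⟨c, ?_, hc⟩
      intro h0; rw [h0, zero_smul] at hc; exact hh i hc
    -- since f i₀ ∈ Rvec y, y is parallel to h i₁, so every f i ∈ Rvec y... unless
    -- some f i ∉ Rvec y, in which case it's in Lvec x and the same argument flips.
    by_cases hR : ∀ i, f i ∈ Rvec y
    · exact Or.inr hR
    exfalso
    push_neg at hR
    obtain ⟨i₃, hi₃⟩ := hR
    have hfL : f i₃ ∈ Lvec x := (hmem i₃).resolve_left hi₃
    -- f i₀ ∈ Rvec y : y parallel to h i₀ hence to h i₁ ; f i₃ has row h i₃ ∥ h i₁ ∥ y,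
    -- so f i₃ ∈ Rvec y, contradiction
    obtain ⟨u₀, hu₀⟩ := mem_Rvec_iff.mp hfR
    have hne₀ : f i₀ ≠ 0 := by
      intro h0
      have := h1 i₀
      rw [rowRank_zero_iff.mpr h0] at this
      exact one_ne_zero this.symm
    have heq₀ : vecMulVec (g i₀) (h i₀) = vecMulVec u₀ y := by rw [← hgh i₀, ← hu₀]
    obtain ⟨cy, hcy0, hcy⟩ := (outer_eq_outer heq₀ ((hgh i₀) ▸ hne₀)).2
    -- y = cy • h i₀ ; h i₀ = c₀ • h i₁
    obtain ⟨c₀, hc₀0, hc₀⟩ := hrowline i₀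
    obtain ⟨c₃, hc₃0, hc₃⟩ := hrowline i₃
    apply hi₃
    rw [mem_Rvec_iff]
    -- f i₃ = vecMulVec (g i₃) (h i₃), h i₃ = c₃ • h i₁ = (c₃ / (cy * c₀)) • y
    refine ⟨(c₃ / (cy * c₀)) • g i₃, ?_⟩
    rw [hgh i₃]
    ext i' j'
    simp only [vecMulVec_apply, Pi.smul_apply, smul_eq_mul]
    rw [hc₃, hcy, hc₀]
    simp only [Pi.smul_apply, smul_eq_mul]
    field_simp

end Stmt19Aux4
section Stmt19Main

open Matrix

variable {F : Type*} [Field F] [Fintype F] {m n p q : ℕ}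

/-- `A` is an L-point for `φ` with pencil direction `x`. -/
private def LPt (φ : Matrix (Fin m) (Fin n) F → Matrix (Fin p) (Fin q) F)
    (x : Fin p → F) (A : Matrix (Fin m) (Fin n) F) : Prop :=
  x ≠ 0 ∧ ∀ N, rowRank N ≤ 1 → φ (A + N) - φ A ∈ Lvec x

/-- `A` is an R-point for `φ` with pencil direction `y`. -/
private def RPt (φ : Matrix (Fin m) (Fin n) F → Matrix (Fin p) (Fin q) F)
    (y : Fin q → F) (A : Matrix (Fin m) (Fin n) F) : Prop :=
  y ≠ 0 ∧ ∀ N, rowRank N ≤ 1 → φ (A + N) - φ A ∈ Rvec y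

variable {φ : Matrix (Fin m) (Fin n) F → Matrix (Fin p) (Fin q) F}

private lemma adj_img (hφ : ∀ A B, Adjacent A B → Adjacent (φ A) (φ B))
    {A : Matrix (Fin m) (Fin n) F} {u : Fin m → F} {v : Fin n → F}
    (hu : u ≠ 0) (hv : v ≠ 0) :
    rowRank (φ (A + vecMulVec u v) - φ A) = 1 := by
  have hAdj : Adjacent A (A + vecMulVec u v) := by
    show rowRank (A - (A + vecMulVec u v)) = 1
    have he : A - (A + vecMulVec u v) = -(vecMulVec u v) := by abel
    rw [he, rowRank_neg]
    exact rowRank_eq_one_iff.mpr ⟨⟨u, v, rfl⟩, vmv_ne_zero hu hv⟩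
  have h2 := hφ A (A + vecMulVec u v) hAdj
  have he : φ (A + vecMulVec u v) - φ A = -(φ A - φ (A + vecMulVec u v)) := by abel
  rw [he, rowRank_neg]
  exact h2

/-- Column-clique typing. -/
private lemma colType (hφ : ∀ A B, Adjacent A B → Adjacent (φ A) (φ B))
    {A : Matrix (Fin m) (Fin n) F} {x : Fin p → F} {y : Fin q → F}
    (hball : ∀ N, rowRank N ≤ 1 → φ (A + N) - φ A ∈ Rvec y ∪ Lvec x)
    {u : Fin m → F} (hu : u ≠ 0) :
    (∀ b, φ (A + vecMulVec u b) - φ A ∈ Lvec x) ∨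
    (∀ b, φ (A + vecMulVec u b) - φ A ∈ Rvec y) := by
  set f : {b : Fin n → F // b ≠ 0} → Matrix (Fin p) (Fin q) F :=
    fun b => φ (A + vecMulVec u b.1) - φ A with hf
  have hzero : ∀ b : Fin n → F, b = 0 → φ (A + vecMulVec u b) - φ A = 0 := by
    intro b hb
    have : vecMulVec u b = 0 := by ext i j; simp [vecMulVec_apply, hb]
    rw [this, add_zero, sub_self]
  have h1 : ∀ b, rowRank (f b) = 1 := fun b => adj_img hφ hu b.2
  have hdiff : ∀ b b' : {b : Fin n → F // b ≠ 0}, rowRank (f b - f b') ≤ 1 := by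
    intro b b'
    have he : f b - f b' = φ (A + vecMulVec u b.1) - φ (A + vecMulVec u b'.1) := by
      rw [hf]; beta_reduce; abel
    by_cases hbb : b.1 = b'.1
    · rw [he, hbb, sub_self]
      rw [rowRank_zero_iff.mpr rfl]
      omega
    · have he2 : A + vecMulVec u b.1 = (A + vecMulVec u b'.1) + vecMulVec u (b.1 - b'.1) := by
        rw [← vmv_sub_right]; abel
      have := adj_img hφ (A := A + vecMulVec u b'.1) hu (sub_ne_zero.mpr hbb)
      rw [he, he2]
      rw [← he2, he2]
      exact le_of_eq this
  have hmem : ∀ b, f b ∈ Rvec y ∪ Lvec x := fun b =>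
    hball (vecMulVec u b.1) (rowRank_le_one_iff.mpr ⟨u, b.1, rfl⟩)
  rcases dichotomy f h1 hdiff hmem with hL | hR
  · left
    intro b
    by_cases hb : b = 0
    · rw [hzero b hb]; exact Lvec_zero_mem x
    · exact hL ⟨b, hb⟩
  · right
    intro b
    by_cases hb : b = 0
    · rw [hzero b hb]; exact Rvec_zero_mem y
    · exact hR ⟨b, hb⟩

/-- Row-clique typing. -/
private lemma rowType (hφ : ∀ A B, Adjacent A B → Adjacent (φ A) (φ B))
    {A : Matrix (Fin m) (Fin n) F} {x : Fin p → F} {y : Fin q → F}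
    (hball : ∀ N, rowRank N ≤ 1 → φ (A + N) - φ A ∈ Rvec y ∪ Lvec x)
    {v : Fin n → F} (hv : v ≠ 0) :
    (∀ w, φ (A + vecMulVec w v) - φ A ∈ Lvec x) ∨
    (∀ w, φ (A + vecMulVec w v) - φ A ∈ Rvec y) := by
  set f : {w : Fin m → F // w ≠ 0} → Matrix (Fin p) (Fin q) F :=
    fun w => φ (A + vecMulVec w.1 v) - φ A with hf
  have hzero : ∀ w : Fin m → F, w = 0 → φ (A + vecMulVec w v) - φ A = 0 := by
    intro w hw
    have : vecMulVec w v = 0 := by ext i j; simp [vecMulVec_apply, hw]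
    rw [this, add_zero, sub_self]
  have h1 : ∀ w, rowRank (f w) = 1 := fun w => adj_img hφ w.2 hv
  have hdiff : ∀ w w' : {w : Fin m → F // w ≠ 0}, rowRank (f w - f w') ≤ 1 := by
    intro w w'
    have he : f w - f w' = φ (A + vecMulVec w.1 v) - φ (A + vecMulVec w'.1 v) := by
      rw [hf]; beta_reduce; abel
    by_cases hww : w.1 = w'.1
    · rw [he, hww, sub_self]
      rw [rowRank_zero_iff.mpr rfl]
      omega
    · have he2 : A + vecMulVec w.1 v = (A + vecMulVec w'.1 v) + vecMulVec (w.1 - w'.1) v := by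
        rw [← vmv_sub_left]; abel
      have := adj_img hφ (A := A + vecMulVec w'.1 v) (sub_ne_zero.mpr hww) hv
      rw [he, he2]
      rw [← he2, he2]
      exact le_of_eq this
  have hmem : ∀ w, f w ∈ Rvec y ∪ Lvec x := fun w =>
    hball (vecMulVec w.1 v) (rowRank_le_one_iff.mpr ⟨w.1, v, rfl⟩)
  rcases dichotomy f h1 hdiff hmem with hL | hR
  · left
    intro w
    by_cases hw : w = 0
    · rw [hzero w hw]; exact Lvec_zero_mem x
    · exact hL ⟨w, hw⟩
  · right
    intro w
    by_cases hw : w = 0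
    · rw [hzero w hw]; exact Rvec_zero_mem y
    · exact hR ⟨w, hw⟩

end Stmt19Main
section Stmt19Main2

open Matrix

variable {F : Type*} [Field F] [Fintype F] {m n p q : ℕ}
variable {φ : Matrix (Fin m) (Fin n) F → Matrix (Fin p) (Fin q) F}

/-- No column direction can be L-typed while another is R-typed. -/
private lemma LRfalse (hφ : ∀ A B, Adjacent A B → Adjacent (φ A) (φ B))
    (hn : 2 ≤ n)
    {A : Matrix (Fin m) (Fin n) F} {x : Fin p → F} {y : Fin q → F} (hx : x ≠ 0)
    (hball : ∀ N, rowRank N ≤ 1 → φ (A + N) - φ A ∈ Rvec y ∪ Lvec x)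
    {u₁ u₂ : Fin m → F} (hu₁ : u₁ ≠ 0) (hu₂ : u₂ ≠ 0)
    (hL : ∀ b, φ (A + vecMulVec u₁ b) - φ A ∈ Lvec x)
    (hR : ∀ b, φ (A + vecMulVec u₂ b) - φ A ∈ Rvec y) : False := by
  classical
  have key : ∀ b : {b : Fin n → F // b ≠ 0}, ∃ cc : Bool × {c : F // c ≠ 0},
      (cc.1 = true → φ (A + vecMulVec u₂ b.1) - φ A = cc.2.1 • vecMulVec x y) ∧
      (cc.1 = false → φ (A + vecMulVec u₁ b.1) - φ A = cc.2.1 • vecMulVec x y) := by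
    intro b
    by_cases hb : ∀ w, φ (A + vecMulVec w b.1) - φ A ∈ Lvec x
    · -- row-clique of b is L-typed : use the R-typed column clique u₂
      have hmemL : φ (A + vecMulVec u₂ b.1) - φ A ∈ Lvec x := hb u₂
      have hmemR : φ (A + vecMulVec u₂ b.1) - φ A ∈ Rvec y := hR b.1
      have hne : φ (A + vecMulVec u₂ b.1) - φ A ≠ 0 := by
        intro h0
        have := adj_img hφ hu₂ b.2 (A := A)
        rw [h0, rowRank_zero_iff.mpr rfl] at this
        exact one_ne_zero this.symm
      obtain ⟨c, hc, hc0⟩ := mem_inter_scalar hx hmemL hmemR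
      exact ⟨(true, ⟨c, hc0 hne⟩), fun _ => hc, fun h => by simp at h⟩
    · have hRb := (rowType hφ hball b.2).resolve_left hb
      have hmemL : φ (A + vecMulVec u₁ b.1) - φ A ∈ Lvec x := hL b.1
      have hmemR : φ (A + vecMulVec u₁ b.1) - φ A ∈ Rvec y := hRb u₁
      have hne : φ (A + vecMulVec u₁ b.1) - φ A ≠ 0 := by
        intro h0
        have := adj_img hφ hu₁ b.2 (A := A)
        rw [h0, rowRank_zero_iff.mpr rfl] at this
        exact one_ne_zero this.symm
      obtain ⟨c, hc, hc0⟩ := mem_inter_scalar hx hmemL hmemR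
      exact ⟨(false, ⟨c, hc0 hne⟩), fun h => by simp at h, fun _ => hc⟩
  choose inj hinj using key
  have hinjective : Function.Injective inj := by
    intro b b' heq
    by_contra hbb
    have hbne : b.1 ≠ b'.1 := fun h => hbb (Subtype.ext h)
    -- the two images are equal, so same bool and same scalar
    have hdiffne : ∀ u : Fin m → F, u ≠ 0 →
        φ (A + vecMulVec u b.1) - φ A ≠ φ (A + vecMulVec u b'.1) - φ A := by
      intro u hu hcontra
      have he2 : A + vecMulVec u b.1 = (A + vecMulVec u b'.1) + vecMulVec u (b.1 - b'.1) := by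
        rw [← vmv_sub_right]; abel
      have hrk := adj_img hφ (A := A + vecMulVec u b'.1) hu (sub_ne_zero.mpr hbne)
      rw [← he2] at hrk
      have hzero : φ (A + vecMulVec u b.1) - φ (A + vecMulVec u b'.1) = 0 := by
        have := sub_eq_zero.mpr hcontra
        calc φ (A + vecMulVec u b.1) - φ (A + vecMulVec u b'.1)
            = (φ (A + vecMulVec u b.1) - φ A) - (φ (A + vecMulVec u b'.1) - φ A) := by abel
        _ = 0 := this
      rw [hzero, rowRank_zero_iff.mpr rfl] at hrk
      exact one_ne_zero hrk.symm
    rcases Bool.eq_false_or_eq_true (inj b).1 with hbool | hbool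
    · have h1 := (hinj b).1 hbool
      have h2 := (hinj b').1 (heq ▸ hbool)
      rw [heq] at h1
      exact hdiffne u₂ hu₂ (by rw [h1, h2])
    · have h1 := (hinj b).2 hbool
      have h2 := (hinj b').2 (heq ▸ hbool)
      rw [heq] at h1
      exact hdiffne u₁ hu₁ (by rw [h1, h2])
  exact no_injection hn 0 inj hinjective

/-- Every point is an L-point or an R-point. -/
private lemma stepA (hφ : ∀ A B, Adjacent A B → Adjacent (φ A) (φ B))
    (hdeg : Degenerate φ) (hn : 2 ≤ n) (A : Matrix (Fin m) (Fin n) F) :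
    (∃ x, LPt φ x A) ∨ (∃ y, RPt φ y A) := by
  obtain ⟨x, hx, y, hy, hball⟩ := hdeg A
  have hcover : ∀ N : Matrix (Fin m) (Fin n) F, rowRank N ≤ 1 → N = 0 ∨
      ∃ u v, u ≠ 0 ∧ v ≠ 0 ∧ N = vecMulVec u v := by
    intro N hN
    obtain ⟨u, v, rfl⟩ := rowRank_le_one_iff.mp hN
    by_cases hu : u = 0
    · left; ext i j; simp [vecMulVec_apply, hu]
    by_cases hv : v = 0
    · left; ext i j; simp [vecMulVec_apply, hv]
    exact Or.inr ⟨u, v, hu, hv, rfl⟩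
  by_cases hAllL : ∀ u : Fin m → F, u ≠ 0 → ∀ b, φ (A + vecMulVec u b) - φ A ∈ Lvec x
  · left
    refine ⟨x, hx, fun N hN => ?_⟩
    rcases hcover N hN with rfl | ⟨u, v, hu, hv, rfl⟩
    · rw [add_zero, sub_self]; exact Lvec_zero_mem x
    · exact hAllL u hu v
  · push_neg at hAllL
    obtain ⟨u₂, hu₂, b₂, hb₂⟩ := hAllL
    have hRu₂ : ∀ b, φ (A + vecMulVec u₂ b) - φ A ∈ Rvec y :=
      (colType hφ hball hu₂).resolve_left (fun hLty => hb₂ (hLty b₂))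
    right
    refine ⟨y, hy, fun N hN => ?_⟩
    rcases hcover N hN with rfl | ⟨u, v, hu, hv, rfl⟩
    · rw [add_zero, sub_self]; exact Rvec_zero_mem y
    · rcases colType hφ hball hu with hLty | hRty
      · exact absurd (LRfalse hφ hn hx hball hu hu₂ hLty hRu₂) id
      · exact hRty v

end Stmt19Main2
section Stmt19Main3

open Matrix

variable {F : Type*} [Field F] [Fintype F] {m n p q : ℕ}
variable {φ : Matrix (Fin m) (Fin n) F → Matrix (Fin p) (Fin q) F}

/-- A common nonzero member forces the pencil `L(x')` to be contained in `L(x)`. -/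
private lemma LLsub {x x' : Fin p → F} {X : Matrix (Fin p) (Fin q) F}
    (hX : X ∈ Lvec x) (hX' : X ∈ Lvec x') (hne : X ≠ 0) :
    ∀ W : Matrix (Fin p) (Fin q) F, W ∈ Lvec x' → W ∈ Lvec x := by
  obtain ⟨w, rfl⟩ := mem_Lvec_iff.mp hX
  obtain ⟨w', hw'⟩ := mem_Lvec_iff.mp hX'
  obtain ⟨⟨c, hc, hcx⟩, -⟩ := outer_eq_outer hw' hne
  intro W hW
  obtain ⟨t, rfl⟩ := mem_Lvec_iff.mp hW
  rw [mem_Lvec_iff]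
  refine ⟨c • t, ?_⟩
  rw [hcx, vmv_smul_comm]

private lemma RRsub {y y' : Fin q → F} {X : Matrix (Fin p) (Fin q) F}
    (hX : X ∈ Rvec y) (hX' : X ∈ Rvec y') (hne : X ≠ 0) :
    ∀ W : Matrix (Fin p) (Fin q) F, W ∈ Rvec y' → W ∈ Rvec y := by
  obtain ⟨w, rfl⟩ := mem_Rvec_iff.mp hX
  obtain ⟨w', hw'⟩ := mem_Rvec_iff.mp hX'
  obtain ⟨-, ⟨c, hc, hcy⟩⟩ := outer_eq_outer hw' hne
  intro W hW
  obtain ⟨t, rfl⟩ := mem_Rvec_iff.mp hW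
  rw [mem_Rvec_iff]
  refine ⟨c • t, ?_⟩
  rw [hcy, ← vmv_smul_comm]

/-- L-points propagate along adjacency, keeping their pencil. -/
private lemma stepB_L (hφ : ∀ A B, Adjacent A B → Adjacent (φ A) (φ B))
    (hdeg : Degenerate φ) (hn : 2 ≤ n)
    {A : Matrix (Fin m) (Fin n) F} {x : Fin p → F} {u : Fin m → F} {v : Fin n → F}
    (hu : u ≠ 0) (hv : v ≠ 0) (hA : LPt φ x A) :
    LPt φ x (A + vecMulVec u v) := by
  classical
  set B := A + vecMulVec u v with hB
  -- key : for b ≠ v, the matrix E b is a nonzero member of Lvec x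
  have hBpt : ∀ b : Fin n → F, A + vecMulVec u b = B + vecMulVec u (b - v) := by
    intro b
    rw [hB, ← vmv_sub_right]; abel
  have hE_Lx : ∀ b : Fin n → F, φ (A + vecMulVec u b) - φ B ∈ Lvec x := by
    intro b
    have h1 : φ (A + vecMulVec u b) - φ A ∈ Lvec x :=
      hA.2 _ (rowRank_le_one_iff.mpr ⟨u, b, rfl⟩)
    have h2 : φ B - φ A ∈ Lvec x := hA.2 _ (rowRank_le_one_iff.mpr ⟨u, v, rfl⟩)
    have he : φ (A + vecMulVec u b) - φ B =
        (φ (A + vecMulVec u b) - φ A) - (φ B - φ A) := by abel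
    rw [he]
    exact Lvec_sub_mem h1 h2
  have hE_ne : ∀ b : Fin n → F, b ≠ v → φ (A + vecMulVec u b) - φ B ≠ 0 := by
    intro b hb h0
    have := adj_img hφ (A := B) hu (sub_ne_zero.mpr hb)
    rw [← hBpt b] at this
    rw [h0, rowRank_zero_iff.mpr rfl] at this
    exact one_ne_zero this.symm
  have hE_diff : ∀ b b' : Fin n → F, b ≠ b' →
      φ (A + vecMulVec u b) - φ B ≠ φ (A + vecMulVec u b') - φ B := by
    intro b b' hbb hcontra
    have he2 : A + vecMulVec u b = (A + vecMulVec u b') + vecMulVec u (b - b') := by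
      rw [← vmv_sub_right]; abel
    have hrk := adj_img hφ (A := A + vecMulVec u b') hu (sub_ne_zero.mpr hbb)
    rw [← he2] at hrk
    have hzero : φ (A + vecMulVec u b) - φ (A + vecMulVec u b') = 0 := by
      have h3 : (φ (A + vecMulVec u b) - φ B) - (φ (A + vecMulVec u b') - φ B) = 0 :=
        sub_eq_zero.mpr hcontra
      calc φ (A + vecMulVec u b) - φ (A + vecMulVec u b')
          = (φ (A + vecMulVec u b) - φ B) - (φ (A + vecMulVec u b') - φ B) := by abel
      _ = 0 := h3
    rw [hzero, rowRank_zero_iff.mpr rfl] at hrk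
    exact one_ne_zero hrk.symm
  rcases stepA hφ hdeg hn B with ⟨x', hx'⟩ | ⟨y', hy'⟩
  · -- B is an L-point with direction x' ; transfer pencil
    -- pick b₀ ≠ v
    have hne' : Nonempty (Fin n) := ⟨⟨0, by omega⟩⟩
    obtain ⟨j₀⟩ := hne'
    have hsingle : (Pi.single j₀ 1 : Fin n → F) ≠ 0 := by
      intro h
      have h2 := congrFun h j₀
      simp [Pi.single_eq_same] at h2
    set b₀ := v + (Pi.single j₀ 1 : Fin n → F) with hb₀
    have hb₀v : b₀ ≠ v := by
      rw [hb₀]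
      intro h
      exact hsingle (by rwa [add_eq_left] at h)
    have hEx' : φ (A + vecMulVec u b₀) - φ B ∈ Lvec x' := by
      rw [hBpt b₀]
      exact hx'.2 _ (rowRank_le_one_iff.mpr ⟨u, b₀ - v, rfl⟩)
    have hsub := LLsub (hE_Lx b₀) hEx' (hE_ne b₀ hb₀v)
    exact ⟨hA.1, fun N hN => hsub _ (hx'.2 N hN)⟩
  · -- B an R-point : contradiction by counting
    exfalso
    have key : ∀ b : {b : Fin n → F // b ≠ v}, ∃ cc : Bool × {c : F // c ≠ 0},
        φ (A + vecMulVec u b.1) - φ B = cc.2.1 • vecMulVec x y' := by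
      intro b
      have hR : φ (A + vecMulVec u b.1) - φ B ∈ Rvec y' := by
        rw [hBpt b.1]
        exact hy'.2 _ (rowRank_le_one_iff.mpr ⟨u, b.1 - v, rfl⟩)
      obtain ⟨c, hc, hc0⟩ := mem_inter_scalar hA.1 (hE_Lx b.1) hR
      exact ⟨(true, ⟨c, hc0 (hE_ne b.1 b.2)⟩), hc⟩
    choose inj hinj using key
    have hinjective : Function.Injective inj := by
      intro b b' heq
      by_contra hbb
      have hbne : b.1 ≠ b'.1 := fun h => hbb (Subtype.ext h)
      apply hE_diff b.1 b'.1 hbne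
      rw [hinj b, hinj b', heq]
    exact no_injection hn v inj hinjective

/-- R-points propagate along adjacency, keeping their pencil. -/
private lemma stepB_R (hφ : ∀ A B, Adjacent A B → Adjacent (φ A) (φ B))
    (hdeg : Degenerate φ) (hm : 2 ≤ m) (hn : 2 ≤ n)
    {A : Matrix (Fin m) (Fin n) F} {y : Fin q → F} {u : Fin m → F} {v : Fin n → F}
    (hu : u ≠ 0) (hv : v ≠ 0) (hA : RPt φ y A) :
    RPt φ y (A + vecMulVec u v) := by
  classical
  set B := A + vecMulVec u v with hB
  have hBpt : ∀ w : Fin m → F, A + vecMulVec w v = B + vecMulVec (w - u) v := by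
    intro w
    rw [hB, ← vmv_sub_left]; abel
  have hE_Ry : ∀ w : Fin m → F, φ (A + vecMulVec w v) - φ B ∈ Rvec y := by
    intro w
    have h1 : φ (A + vecMulVec w v) - φ A ∈ Rvec y :=
      hA.2 _ (rowRank_le_one_iff.mpr ⟨w, v, rfl⟩)
    have h2 : φ B - φ A ∈ Rvec y := hA.2 _ (rowRank_le_one_iff.mpr ⟨u, v, rfl⟩)
    have he : φ (A + vecMulVec w v) - φ B =
        (φ (A + vecMulVec w v) - φ A) - (φ B - φ A) := by abel
    rw [he]
    exact Rvec_sub_mem h1 h2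
  have hE_ne : ∀ w : Fin m → F, w ≠ u → φ (A + vecMulVec w v) - φ B ≠ 0 := by
    intro w hw h0
    have := adj_img hφ (A := B) (sub_ne_zero.mpr hw) hv
    rw [← hBpt w] at this
    rw [h0, rowRank_zero_iff.mpr rfl] at this
    exact one_ne_zero this.symm
  have hE_diff : ∀ w w' : Fin m → F, w ≠ w' →
      φ (A + vecMulVec w v) - φ B ≠ φ (A + vecMulVec w' v) - φ B := by
    intro w w' hww hcontra
    have he2 : A + vecMulVec w v = (A + vecMulVec w' v) + vecMulVec (w - w') v := by
      rw [← vmv_sub_left]; abel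
    have hrk := adj_img hφ (A := A + vecMulVec w' v) (sub_ne_zero.mpr hww) hv
    rw [← he2] at hrk
    have hzero : φ (A + vecMulVec w v) - φ (A + vecMulVec w' v) = 0 := by
      have h3 : (φ (A + vecMulVec w v) - φ B) - (φ (A + vecMulVec w' v) - φ B) = 0 :=
        sub_eq_zero.mpr hcontra
      calc φ (A + vecMulVec w v) - φ (A + vecMulVec w' v)
          = (φ (A + vecMulVec w v) - φ B) - (φ (A + vecMulVec w' v) - φ B) := by abel
      _ = 0 := h3
    rw [hzero, rowRank_zero_iff.mpr rfl] at hrk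
    exact one_ne_zero hrk.symm
  rcases stepA hφ hdeg hn B with ⟨x', hx'⟩ | ⟨y', hy'⟩
  · -- B an L-point : contradiction by counting over w
    exfalso
    have key : ∀ w : {w : Fin m → F // w ≠ u}, ∃ cc : Bool × {c : F // c ≠ 0},
        φ (A + vecMulVec w.1 v) - φ B = cc.2.1 • vecMulVec x' y := by
      intro w
      have hLx' : φ (A + vecMulVec w.1 v) - φ B ∈ Lvec x' := by
        rw [hBpt w.1]
        exact hx'.2 _ (rowRank_le_one_iff.mpr ⟨w.1 - u, v, rfl⟩)
      obtain ⟨c, hc, hc0⟩ := mem_inter_scalar hx'.1 hLx' (hE_Ry w.1)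
      exact ⟨(true, ⟨c, hc0 (hE_ne w.1 w.2)⟩), hc⟩
    choose inj hinj using key
    have hinjective : Function.Injective inj := by
      intro w w' heq
      by_contra hww
      have hwne : w.1 ≠ w'.1 := fun h => hww (Subtype.ext h)
      apply hE_diff w.1 w'.1 hwne
      rw [hinj w, hinj w', heq]
    exact no_injection hm u inj hinjective
  · -- B an R-point with direction y' ; transfer pencil
    have hne' : Nonempty (Fin m) := ⟨⟨0, by omega⟩⟩
    obtain ⟨i₀⟩ := hne'
    have hsingle : (Pi.single i₀ 1 : Fin m → F) ≠ 0 := by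
      intro h
      have h2 := congrFun h i₀
      simp [Pi.single_eq_same] at h2
    set w₀ := u + (Pi.single i₀ 1 : Fin m → F) with hw₀
    have hw₀u : w₀ ≠ u := by
      rw [hw₀]
      intro h
      exact hsingle (by rwa [add_eq_left] at h)
    have hEy' : φ (A + vecMulVec w₀ v) - φ B ∈ Rvec y' := by
      rw [hBpt w₀]
      exact hy'.2 _ (rowRank_le_one_iff.mpr ⟨w₀ - u, v, rfl⟩)
    have hsub := RRsub (hE_Ry w₀) hEy' (hE_ne w₀ hw₀u)
    exact ⟨hA.1, fun N hN => hsub _ (hy'.2 N hN)⟩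

end Stmt19Main3
section Stmt19Main4

open Matrix

variable {F : Type*} [Field F] [Fintype F] {m n p q : ℕ}
variable {φ : Matrix (Fin m) (Fin n) F → Matrix (Fin p) (Fin q) F}

private lemma single_entry_decomp (A : Matrix (Fin m) (Fin n) F) (a : Fin m × Fin n)
    (hc : A a.1 a.2 ≠ 0) :
    A = (Matrix.of fun i j => if (i, j) = a then 0 else A i j) +
      vecMulVec (Pi.single a.1 (A a.1 a.2) : Fin m → F) (Pi.single a.2 1 : Fin n → F) := by
  ext i j
  simp only [Matrix.add_apply, Matrix.of_apply, vecMulVec_apply]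
  by_cases hi : i = a.1
  · by_cases hj : j = a.2
    · have hij : (i, j) = a := by rw [hi, hj]
      rw [if_pos hij, hi, hj, Pi.single_eq_same, Pi.single_eq_same, mul_one, zero_add]
    · have hij : (i, j) ≠ a := fun h => hj (by rw [← h])
      rw [if_neg hij, Pi.single_eq_of_ne hj, mul_zero, add_zero]
  · have hij : (i, j) ≠ a := fun h => hi (by rw [← h])
    rw [if_neg hij, Pi.single_eq_of_ne hi, zero_mul, add_zero]

private lemma pathL (hφ : ∀ A B, Adjacent A B → Adjacent (φ A) (φ B))
    (hdeg : Degenerate φ) (hn : 2 ≤ n) (h0 : φ 0 = 0)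
    {x₀ : Fin p → F} (h00 : LPt φ x₀ 0) :
    ∀ A : Matrix (Fin m) (Fin n) F, φ A ∈ Lvec x₀ := by
  classical
  have main : ∀ s : Finset (Fin m × Fin n), ∀ A : Matrix (Fin m) (Fin n) F,
      (∀ ij : Fin m × Fin n, ij ∉ s → A ij.1 ij.2 = 0) → LPt φ x₀ A ∧ φ A ∈ Lvec x₀ := by
    intro s
    induction s using Finset.induction_on with
    | empty =>
      intro A hA
      have hA0 : A = 0 := by
        ext i j; exact hA (i, j) (Finset.notMem_empty _)
      rw [hA0]
      exact ⟨h00, by rw [h0]; exact Lvec_zero_mem x₀⟩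
    | @insert a s ha ih =>
      intro A hA
      set A' : Matrix (Fin m) (Fin n) F :=
        Matrix.of fun i j => if (i, j) = a then 0 else A i j with hA'def
      have hA' : ∀ ij : Fin m × Fin n, ij ∉ s → A' ij.1 ij.2 = 0 := by
        intro ij hij
        by_cases h : ij = a
        · simp only [hA'def, Matrix.of_apply]
          rw [if_pos (by rw [← h])]
        · have hnotin : ij ∉ insert a s := by
            simp only [Finset.mem_insert]
            push_neg
            exact ⟨h, hij⟩
          simp only [hA'def, Matrix.of_apply]
          rw [if_neg (by rw [Prod.mk.eta]; exact h), hA ij hnotin]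
      obtain ⟨hLP', hmem'⟩ := ih A' hA'
      by_cases hc : A a.1 a.2 = 0
      · have hAA' : A = A' := by
          ext i j
          simp only [hA'def, Matrix.of_apply]
          by_cases h : (i, j) = a
          · rw [if_pos h]
            have h1 : i = a.1 := by rw [← h]
            have h2 : j = a.2 := by rw [← h]
            rw [h1, h2, hc]
          · rw [if_neg h]
        rw [hAA']
        exact ⟨hLP', hmem'⟩
      · have hdec := single_entry_decomp A a hc
        have hu : (Pi.single a.1 (A a.1 a.2) : Fin m → F) ≠ 0 := by
          intro h
          have h2 := congrFun h a.1
          rw [Pi.single_eq_same] at h2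
          exact hc (by simpa using h2)
        have hv : (Pi.single a.2 1 : Fin n → F) ≠ 0 := by
          intro h
          have h2 := congrFun h a.2
          rw [Pi.single_eq_same] at h2
          simp at h2
        constructor
        · rw [hdec]
          exact stepB_L hφ hdeg hn hu hv hLP'
        · rw [hdec]
          have he : φ (A' + vecMulVec (Pi.single a.1 (A a.1 a.2)) (Pi.single a.2 1)) =
              φ A' + (φ (A' + vecMulVec (Pi.single a.1 (A a.1 a.2)) (Pi.single a.2 1)) - φ A') := by
            abel
          rw [he]
          exact Lvec_add_mem hmem'
            (hLP'.2 _ (rowRank_le_one_iff.mpr ⟨_, _, rfl⟩))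
  intro A
  exact (main Finset.univ A (fun ij hij => absurd (Finset.mem_univ ij) hij)).2

private lemma pathR (hφ : ∀ A B, Adjacent A B → Adjacent (φ A) (φ B))
    (hdeg : Degenerate φ) (hm : 2 ≤ m) (hn : 2 ≤ n) (h0 : φ 0 = 0)
    {y₀ : Fin q → F} (h00 : RPt φ y₀ 0) :
    ∀ A : Matrix (Fin m) (Fin n) F, φ A ∈ Rvec y₀ := by
  classical
  have main : ∀ s : Finset (Fin m × Fin n), ∀ A : Matrix (Fin m) (Fin n) F,
      (∀ ij : Fin m × Fin n, ij ∉ s → A ij.1 ij.2 = 0) → RPt φ y₀ A ∧ φ A ∈ Rvec y₀ := by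
    intro s
    induction s using Finset.induction_on with
    | empty =>
      intro A hA
      have hA0 : A = 0 := by
        ext i j; exact hA (i, j) (Finset.notMem_empty _)
      rw [hA0]
      exact ⟨h00, by rw [h0]; exact Rvec_zero_mem y₀⟩
    | @insert a s ha ih =>
      intro A hA
      set A' : Matrix (Fin m) (Fin n) F :=
        Matrix.of fun i j => if (i, j) = a then 0 else A i j with hA'def
      have hA' : ∀ ij : Fin m × Fin n, ij ∉ s → A' ij.1 ij.2 = 0 := by
        intro ij hij
        by_cases h : ij = a
        · simp only [hA'def, Matrix.of_apply]
          rw [if_pos (by rw [← h])]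
        · have hnotin : ij ∉ insert a s := by
            simp only [Finset.mem_insert]
            push_neg
            exact ⟨h, hij⟩
          simp only [hA'def, Matrix.of_apply]
          rw [if_neg (by rw [Prod.mk.eta]; exact h), hA ij hnotin]
      obtain ⟨hLP', hmem'⟩ := ih A' hA'
      by_cases hc : A a.1 a.2 = 0
      · have hAA' : A = A' := by
          ext i j
          simp only [hA'def, Matrix.of_apply]
          by_cases h : (i, j) = a
          · rw [if_pos h]
            have h1 : i = a.1 := by rw [← h]
            have h2 : j = a.2 := by rw [← h]
            rw [h1, h2, hc]
          · rw [if_neg h]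
        rw [hAA']
        exact ⟨hLP', hmem'⟩
      · have hdec := single_entry_decomp A a hc
        have hu : (Pi.single a.1 (A a.1 a.2) : Fin m → F) ≠ 0 := by
          intro h
          have h2 := congrFun h a.1
          rw [Pi.single_eq_same] at h2
          exact hc (by simpa using h2)
        have hv : (Pi.single a.2 1 : Fin n → F) ≠ 0 := by
          intro h
          have h2 := congrFun h a.2
          rw [Pi.single_eq_same] at h2
          simp at h2
        constructor
        · rw [hdec]
          exact stepB_R hφ hdeg hm hn hu hv hLP'
        · rw [hdec]
          have he : φ (A' + vecMulVec (Pi.single a.1 (A a.1 a.2)) (Pi.single a.2 1)) =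
              φ A' + (φ (A' + vecMulVec (Pi.single a.1 (A a.1 a.2)) (Pi.single a.2 1)) - φ A') := by
            abel
          rw [he]
          exact Rvec_add_mem hmem'
            (hLP'.2 _ (rowRank_le_one_iff.mpr ⟨_, _, rfl⟩))
  intro A
  exact (main Finset.univ A (fun ij hij => absurd (Finset.mem_univ ij) hij)).2

end Stmt19Main4

/-- Proposition 4.4. -/
theorem stmt19 {F : Type*} [Field F] [Fintype F] (m n p q : ℕ) (hm : 0 < m)
    (hn : 0 < n) (hp : 0 < p) (hq : 0 < q)
    (φ : Matrix (Fin m) (Fin n) F → Matrix (Fin p) (Fin q) F)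
    (hφ : ∀ A B, Adjacent A B → Adjacent (φ A) (φ B))
    (hdeg : Degenerate φ) (h0 : φ 0 = 0) :
    ∀ M : Matrix (Fin m) (Fin n) F, rowRank (φ M) ≤ 1 := by
  intro M
  by_cases hdim : 2 ≤ m ∧ 2 ≤ n
  · obtain ⟨hm2, hn2⟩ := hdim
    rcases stepA hφ hdeg hn2 0 with ⟨x₀, h00⟩ | ⟨y₀, h00⟩
    · exact Lvec_rowRank_le (pathL hφ hdeg hn2 h0 h00 M)
    · exact Rvec_rowRank_le (pathR hφ hdeg hm2 hn2 h0 h00 M)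
  · -- degenerate dimensions : every matrix in the domain has rank at most one
    have hM : rowRank M ≤ 1 := by
      rcases not_and_or.mp hdim with h | h
      · have hm1 : m = 1 := by omega
        subst hm1
        refine rowRank_le_one_iff.mpr ⟨fun _ => 1, M 0, ?_⟩
        ext i j
        rw [Subsingleton.elim i 0]
        simp [vecMulVec_apply]
      · have hn1 : n = 1 := by omega
        subst hn1
        refine rowRank_le_one_iff.mpr ⟨fun i => M i 0, fun _ => 1, ?_⟩
        ext i j
        rw [Subsingleton.elim j 0]
        simp [vecMulVec_apply]
    obtain ⟨x₀, hx₀, y₀, hy₀, hball⟩ := hdeg 0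
    have hmem := hball M hM
    rw [zero_add, h0, sub_zero] at hmem
    rcases hmem with h | h
    · exact Rvec_rowRank_le h
    · exact Lvec_rowRank_le h
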